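/- Let Γ be a finite group acting on L ≅ ℤ^ℓ via ρ : Γ → GL(L), and define the reciprocity character δ_ρ(γ) = det(R_γ) = (−1)^{rank(R_γ − I_ℓ)}. Then δ_ρ is a 1-dimensional (hence irreducible) character of Γ, and for every irreducible character χ_i, the quasi-polynomials of multiplicities satisfy m(χ_i ⊗ δ_ρ; q) = (−1)^ℓ m(χ_i; −q), where m(χ_i; −q) denotes evaluation of the quasi-polynomial constituents at −q (with constituent chosen by the class of −q). -/

import Mathlib

open Matrix Module

set_option synthInstance.maxHeartbeats 1000000
set_option maxHeartbeats 1000000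
set_option linter.unusedVariables false
set_option linter.unusedTactic false


lemma filter_lt_card {ℓ r : ℕ} (hr : r ≤ ℓ) :
    ((Finset.univ : Finset (Fin ℓ)).filter fun i : Fin ℓ => (i : ℕ) < r).card = r := by
  have h : ((Finset.univ : Finset (Fin ℓ)).filter fun i : Fin ℓ => (i : ℕ) < r) =
      Finset.map ⟨fun j : Fin r => (⟨(j : ℕ), lt_of_lt_of_le j.isLt hr⟩ : Fin ℓ),
        fun a b hab => by simpa [Fin.ext_iff] using congrArg Fin.val hab⟩ Finset.univ := by
    ext i
    simp only [Finset.mem_filter, Finset.mem_univ, true_and, Finset.mem_map,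
      Function.Embedding.coeFn_mk]
    constructor
    · intro hi; exact ⟨⟨(i : ℕ), hi⟩, Fin.ext rfl⟩
    · rintro ⟨j, rfl⟩; exact j.isLt
  rw [h, Finset.card_map, Finset.card_univ, Fintype.card_fin]

lemma zmod_mul_eq_zero_card (q : ℕ) (hq : 0 < q) (b : ℕ) :
    Nat.card {z : ZMod q // (b : ZMod q) * z = 0} = Nat.gcd b q := by
  haveI : NeZero q := ⟨hq.ne'⟩
  set g := Nat.gcd b q with hgdef
  have hg : 0 < g := Nat.gcd_pos_of_pos_right b hq
  have hgq : g ∣ q := Nat.gcd_dvd_right b q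
  have hgb : g ∣ b := Nat.gcd_dvd_left b q
  set q' := q / g with hq'def
  have hq'g : q' * g = q := Nat.div_mul_cancel hgq
  have hq' : 0 < q' := Nat.div_pos (Nat.le_of_dvd hq hgq) hg
  set b' := b / g with hb'def
  have hb'g : g * b' = b := Nat.mul_div_cancel' hgb
  have hco : Nat.Coprime b' q' := Nat.coprime_div_gcd_div_gcd hg
  have hlt : ∀ k : Fin g, q' * (k : ℕ) < q := by
    intro k
    have := mul_lt_mul_of_pos_left k.isLt hq'
    rwa [hq'g] at this
  have hmem : ∀ k : Fin g, (b : ZMod q) * ((q' * (k : ℕ) : ℕ) : ZMod q) = 0 := by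
    intro k
    have hcast : ((b * (q' * (k : ℕ)) : ℕ) : ZMod q) = 0 := by
      rw [ZMod.natCast_eq_zero_iff]
      exact ⟨b' * k, by rw [← hb'g, ← hq'g]; ring⟩
    rw [Nat.cast_mul] at hcast
    exact hcast
  set F : Fin g → {z : ZMod q // (b : ZMod q) * z = 0} :=
    fun k => ⟨((q' * (k : ℕ) : ℕ) : ZMod q), hmem k⟩ with hF
  have hbij : Function.Bijective F := by
    constructor
    · intro k₁ k₂ h
      have h2 := congrArg ZMod.val (congrArg Subtype.val h)
      simp only [hF] at h2
      rw [ZMod.val_cast_of_lt (hlt k₁), ZMod.val_cast_of_lt (hlt k₂)] at h2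
      exact Fin.ext (Nat.eq_of_mul_eq_mul_left hq' h2)
    · rintro ⟨z, hz⟩
      have hvz : ((z.val : ℕ) : ZMod q) = z := ZMod.natCast_rightInverse z
      have hdvd : q ∣ b * z.val := by
        rw [← ZMod.natCast_eq_zero_iff, Nat.cast_mul, hvz]
        exact hz
      have hq'dvd : q' ∣ z.val := by
        have h1 : g * q' ∣ g * (b' * z.val) := by
          rw [mul_comm g q', hq'g]
          rw [← mul_assoc, hb'g]
          exact hdvd
        have h2 : q' ∣ b' * z.val := (mul_dvd_mul_iff_left hg.ne').mp h1
        exact (Nat.Coprime.dvd_of_dvd_mul_left hco.symm h2)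
      obtain ⟨k, hk⟩ := hq'dvd
      have hklt : k < g := by
        have : q' * k < q' * g := by rw [hq'g, ← hk]; exact ZMod.val_lt z
        exact lt_of_mul_lt_mul_left this (Nat.zero_le q')
      refine ⟨⟨k, hklt⟩, ?_⟩
      apply Subtype.ext
      simp only [hF]
      rw [← hk, hvz]
  rw [← Nat.card_eq_of_bijective F hbij, Nat.card_eq_fintype_card, Fintype.card_fin]

lemma zmod_int_count (q : ℕ) (hq : 0 < q) (a : ℤ) :
    Nat.card {z : ZMod q // z * (a : ZMod q) = 0} = Int.gcd a q := by
  have h : ∀ z : ZMod q, (z * (a : ZMod q) = 0) ↔ ((a.natAbs : ZMod q) * z = 0) := by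
    intro z
    rw [mul_comm]
    rcases Int.natAbs_eq a with h | h
    · have ha : (a : ZMod q) = ((a.natAbs : ℕ) : ZMod q) := by
        conv_lhs => rw [h]
        rw [Int.cast_natCast]
      rw [ha]
    · have ha : (a : ZMod q) = -((a.natAbs : ℕ) : ZMod q) := by
        conv_lhs => rw [h]
        rw [Int.cast_neg, Int.cast_natCast]
      rw [ha, neg_mul, neg_eq_zero]
  rw [Nat.card_congr (Equiv.subtypeEquivRight h), zmod_mul_eq_zero_card q hq a.natAbs]
  simp [Int.gcd]

/-- Number of fixed points of the matrix `M` acting on row vectors of `(ℤ/qℤ)^ℓ`. -/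
noncomputable def fixCard {ℓ : ℕ} (M : Matrix (Fin ℓ) (Fin ℓ) ℤ) (q : ℕ) : ℕ :=
  Nat.card {x : Fin ℓ → ZMod q // Matrix.vecMul x (M.map (Int.cast : ℤ → ZMod q)) = x}

lemma fixCard_formula {ℓ : ℕ} (q : ℕ) (hq : 0 < q) (M S T : Matrix (Fin ℓ) (Fin ℓ) ℤ)
    (hS : IsUnit S.det) (hT : IsUnit T.det) (dd : Fin ℓ → ℤ)
    (hSNF : S * (M - 1) * T = Matrix.diagonal dd) :
    fixCard M q = ∏ i : Fin ℓ, Int.gcd (dd i) q := by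
  haveI : NeZero q := ⟨hq.ne'⟩
  set π := Int.castRingHom (ZMod q) with hπ
  set Ms := π.mapMatrix S with hMs
  set Ts := π.mapMatrix T with hTs
  set Mq := π.mapMatrix M with hMq
  have hmap : M.map (Int.cast : ℤ → ZMod q) = Mq := rfl
  have hdiag : Ms * (Mq - 1) * Ts = diagonal (fun i => ((dd i : ℤ) : ZMod q)) := by
    calc Ms * (Mq - 1) * Ts = π.mapMatrix (S * (M - 1) * T) := by
          rw [_root_.map_mul, _root_.map_mul, map_sub, _root_.map_one]
      _ = π.mapMatrix (diagonal dd) := by rw [hSNF]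
      _ = diagonal (fun i => ((dd i : ℤ) : ZMod q)) := by
          rw [RingHom.mapMatrix_apply, Matrix.diagonal_map (map_zero π)]
          rfl
  obtain ⟨US, hUS⟩ := (Matrix.isUnit_iff_isUnit_det Ms).mpr
    (by rw [← RingHom.map_det]; exact hS.map π)
  obtain ⟨UT, hUT⟩ := (Matrix.isUnit_iff_isUnit_det Ts).mpr
    (by rw [← RingHom.map_det]; exact hT.map π)
  have hUSinv : (↑US⁻¹ : Matrix (Fin ℓ) (Fin ℓ) (ZMod q)) * Ms = 1 := by
    rw [← hUS, ← Units.val_mul, inv_mul_cancel, Units.val_one]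
  have hUSinv' : Ms * (↑US⁻¹ : Matrix (Fin ℓ) (Fin ℓ) (ZMod q)) = 1 := by
    rw [← hUS, ← Units.val_mul, mul_inv_cancel, Units.val_one]
  have hUTinv : Ts * (↑UT⁻¹ : Matrix (Fin ℓ) (Fin ℓ) (ZMod q)) = 1 := by
    rw [← hUT, ← Units.val_mul, mul_inv_cancel, Units.val_one]
  have e1 : ∀ x : Fin ℓ → ZMod q,
      (x ᵥ* Mq = x) ↔ (∀ i, (x ᵥ* (↑US⁻¹ : Matrix (Fin ℓ) (Fin ℓ) (ZMod q))) i * ((dd i : ℤ) : ZMod q) = 0) := by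
    intro x
    have h1 : (x ᵥ* Mq = x) ↔ x ᵥ* (Mq - 1) = 0 := by
      rw [Matrix.vecMul_sub, Matrix.vecMul_one, sub_eq_zero]
    have h2 : (x ᵥ* (Mq - 1) = 0) ↔ (x ᵥ* ((Mq - 1) * Ts) = 0) := by
      rw [← Matrix.vecMul_vecMul]
      constructor
      · intro h; rw [h, Matrix.zero_vecMul]
      · intro h
        have h3 := congrArg (fun v => v ᵥ* (↑UT⁻¹ : Matrix (Fin ℓ) (Fin ℓ) (ZMod q))) h
        rw [Matrix.zero_vecMul, Matrix.vecMul_vecMul, hUTinv, Matrix.vecMul_one] at h3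
        exact h3
    have h3 : x ᵥ* ((Mq - 1) * Ts) =
        (x ᵥ* (↑US⁻¹ : Matrix (Fin ℓ) (Fin ℓ) (ZMod q))) ᵥ* (Ms * (Mq - 1) * Ts) := by
      rw [Matrix.vecMul_vecMul]
      congr 1
      rw [← Matrix.mul_assoc, ← Matrix.mul_assoc, hUSinv, Matrix.one_mul]
    rw [h1, h2, h3, hdiag, funext_iff]
    apply forall_congr'
    intro i
    rw [Matrix.vecMul_diagonal]
    simp
  have E : {x : Fin ℓ → ZMod q // x ᵥ* Mq = x} ≃
      {y : Fin ℓ → ZMod q // ∀ i, y i * ((dd i : ℤ) : ZMod q) = 0} := by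
    refine Equiv.subtypeEquiv
      ⟨fun x => x ᵥ* (↑US⁻¹ : Matrix (Fin ℓ) (Fin ℓ) (ZMod q)),
        fun y => y ᵥ* Ms, ?_, ?_⟩ e1
    · intro x
      simp only [Matrix.vecMul_vecMul, hUSinv, Matrix.vecMul_one]
    · intro y
      simp only [Matrix.vecMul_vecMul, hUSinv', Matrix.vecMul_one]
  show Nat.card {x : Fin ℓ → ZMod q // x ᵥ* (M.map (Int.cast : ℤ → ZMod q)) = x} = _
  rw [hmap, Nat.card_congr E,
    Nat.card_congr (Equiv.subtypePiEquivPi (p := fun i (z : ZMod q) => z * ((dd i : ℤ) : ZMod q) = 0)),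
    Nat.card_pi]
  exact Finset.prod_congr rfl fun i _ => zmod_int_count q hq (dd i)

lemma det_sign_lemma {ℓ n rk : ℕ} (hn : 0 < n) (Rz : Matrix (Fin ℓ) (Fin ℓ) ℤ)
    (hpow : Rz ^ n = 1)
    (hrank : ((Int.castRingHom ℝ).mapMatrix Rz - 1).rank = rk) :
    Rz.det = (-1) ^ rk := by
  classical
  set π := Int.castRingHom ℝ with hπ
  set A := π.mapMatrix Rz with hA
  have hApow : A ^ n = 1 := by rw [hA, ← map_pow, hpow, _root_.map_one]
  have hdet1 : Rz.det = 1 ∨ Rz.det = -1 := by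
    apply Int.isUnit_iff.mp
    apply IsUnit.of_mul_eq_one (Rz ^ (n - 1)).det
    rw [← Matrix.det_mul, ← pow_succ', show n - 1 + 1 = n by omega, hpow, Matrix.det_one]
  have hAdet : A.det = ((Rz.det : ℤ) : ℝ) := by
    rw [hA, ← RingHom.map_det]
    exact eq_intCast π Rz.det
  set f : Module.End ℝ (Fin ℓ → ℝ) := Matrix.toLinAlgEquiv' A with hf
  have hfpow : f ^ n = 1 := by rw [hf, ← map_pow, hApow, _root_.map_one]
  have hdetf : LinearMap.det f = A.det := by
    have h : f = Matrix.toLin' A := rfl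
    rw [h, LinearMap.det_toLin']
  set P : Module.End ℝ (Fin ℓ → ℝ) := (n : ℝ)⁻¹ • ∑ k ∈ Finset.range n, f ^ k with hP
  have hnR : (n : ℝ) ≠ 0 := Nat.cast_ne_zero.mpr hn.ne'
  have hshift : ∑ k ∈ Finset.range n, f ^ (k + 1) = ∑ k ∈ Finset.range n, f ^ k := by
    have h1 := Finset.sum_range_succ' (fun k => f ^ k) n
    rw [Finset.sum_range_succ (fun k => f ^ k) n, hfpow] at h1
    simpa using h1.symm
  have hfP : f * P = P := by
    have h5 : ∑ k ∈ Finset.range n, f * f ^ k = ∑ k ∈ Finset.range n, f ^ k := by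
      rw [Finset.sum_congr rfl fun k _ => (pow_succ' f k).symm]; exact hshift
    rw [hP, mul_smul_comm, Finset.mul_sum, h5]
  have hPf : P * f = P := by
    have h5 : ∑ k ∈ Finset.range n, f ^ k * f = ∑ k ∈ Finset.range n, f ^ k := by
      rw [Finset.sum_congr rfl fun k _ => (pow_succ f k).symm]; exact hshift
    rw [hP, smul_mul_assoc, Finset.sum_mul, h5]
  have hfkP : ∀ k : ℕ, f ^ k * P = P := by
    intro k
    induction k with
    | zero => simp
    | succ k ih => rw [pow_succ', mul_assoc, ih, hfP]
  have hPP : P * P = P := by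
    nth_rewrite 1 [hP]
    rw [smul_mul_assoc, Finset.sum_mul]
    have h2 : ∑ k ∈ Finset.range n, f ^ k * P = (n : ℝ) • P := by
      rw [Finset.sum_congr rfl fun k _ => hfkP k, Finset.sum_const, Finset.card_range,
        ← Nat.cast_smul_eq_nsmul ℝ]
    rw [h2, smul_smul, inv_mul_cancel₀ hnR, one_smul]
  have hproj : LinearMap.IsProj (LinearMap.range P) P := by
    constructor
    · intro x; exact LinearMap.mem_range_self P x
    · rintro x ⟨y, rfl⟩
      have h3 := LinearMap.congr_fun hPP y
      rwa [Module.End.mul_apply] at h3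
  have hfix : ∀ x : Fin ℓ → ℝ, f x = x → P x = x := by
    intro x hx
    have hk : ∀ k : ℕ, (f ^ k) x = x := by
      intro k; induction k with
      | zero => simp
      | succ k ih => rw [pow_succ, Module.End.mul_apply, hx, ih]
    rw [hP, LinearMap.smul_apply, LinearMap.sum_apply,
      Finset.sum_congr rfl fun k _ => hk k, Finset.sum_const, Finset.card_range,
      ← Nat.cast_smul_eq_nsmul ℝ, smul_smul, inv_mul_cancel₀ hnR, one_smul]
  have hrange : LinearMap.range P = LinearMap.ker (f - 1) := by
    apply le_antisymm
    · rintro x ⟨y, rfl⟩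
      rw [LinearMap.mem_ker, LinearMap.sub_apply, Module.End.one_apply, sub_eq_zero]
      have h3 := LinearMap.congr_fun hfP y
      rwa [Module.End.mul_apply] at h3
    · intro x hx
      rw [LinearMap.mem_ker, LinearMap.sub_apply, Module.End.one_apply, sub_eq_zero] at hx
      exact ⟨x, hfix x hx⟩
  have hker : LinearMap.range (f - 1) ≤ LinearMap.ker P := by
    rintro x ⟨y, rfl⟩
    rw [LinearMap.mem_ker]
    have h3 : P * (f - 1) = 0 := by rw [mul_sub, hPf, mul_one, sub_self]
    have h4 := LinearMap.congr_fun h3 y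
    rwa [Module.End.mul_apply, LinearMap.zero_apply] at h4
  set W := LinearMap.ker P with hW
  have hWmap : ∀ x ∈ W, f x ∈ W := by
    intro x hx
    rw [hW, LinearMap.mem_ker] at hx ⊢
    have h3 := LinearMap.congr_fun hPf x
    rw [Module.End.mul_apply] at h3
    rw [h3]; exact hx
  -- finrank W = rk
  have hrangef1 : finrank ℝ (LinearMap.range (f - 1)) = rk := by
    have hf1 : f - 1 = (A - 1).mulVecLin := by
      apply LinearMap.ext; intro v
      simp [hf, Matrix.toLinAlgEquiv'_apply, Matrix.sub_mulVec, Matrix.one_mulVec,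
        LinearMap.sub_apply, Module.End.one_apply]
    have h2 : (A - 1).rank = finrank ℝ (LinearMap.range (A - 1).mulVecLin) := rfl
    rw [← hf1] at h2
    rw [← h2]
    exact hrank
  have hrankW : finrank ℝ W = rk := by
    have e1 := LinearMap.finrank_range_add_finrank_ker (f - 1)
    have e2 := LinearMap.finrank_range_add_finrank_ker P
    rw [Module.finrank_pi, Fintype.card_fin] at e1 e2
    rw [← hW] at e2
    rw [hrange] at e2
    rw [hrangef1] at e1
    -- need : finrank (ker P) ≥ ... use hker monotone
    have e3 : finrank ℝ (LinearMap.range (f - 1)) ≤ finrank ℝ W :=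
      Submodule.finrank_mono hker
    rw [hrangef1] at e3
    omega
  -- determinant via block decomposition
  set B := f.restrict hWmap with hB
  have hdetB : LinearMap.det f = LinearMap.det B := by
    set e := (LinearMap.range P).prodEquivOfIsCompl W hproj.isCompl with he
    have happ : ∀ (x : ↥(LinearMap.range P)) (y : ↥W), e (x, y) = ↑x + ↑y := by
      intro x y
      simp [he]
    have hfx : ∀ x : ↥(LinearMap.range P), f ↑x = ↑x := by
      intro x
      have hx := (le_of_eq hrange) x.2
      rw [LinearMap.mem_ker, LinearMap.sub_apply, Module.End.one_apply,
        sub_eq_zero] at hx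
      exact hx
    have key2 : f ∘ₗ (e : (↥(LinearMap.range P) × ↥W) →ₗ[ℝ] (Fin ℓ → ℝ))
        = (e : (↥(LinearMap.range P) × ↥W) →ₗ[ℝ] (Fin ℓ → ℝ)) ∘ₗ
          ((LinearMap.id : ↥(LinearMap.range P) →ₗ[ℝ] ↥(LinearMap.range P)).prodMap B) := by
      apply LinearMap.ext
      rintro ⟨x, y⟩
      simp only [LinearMap.comp_apply, LinearEquiv.coe_coe, LinearMap.prodMap_apply,
        LinearMap.id_apply]
      rw [happ, happ, _root_.map_add, hfx,
        show f ↑y = ↑(B y) from (LinearMap.restrict_coe_apply f hWmap y).symm]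
    have hfeq : f = ((e : (↥(LinearMap.range P) × ↥W) →ₗ[ℝ] (Fin ℓ → ℝ)) ∘ₗ
        ((LinearMap.id : ↥(LinearMap.range P) →ₗ[ℝ] ↥(LinearMap.range P)).prodMap B)) ∘ₗ
        (e.symm : (Fin ℓ → ℝ) →ₗ[ℝ] (↥(LinearMap.range P) × ↥W)) := by
      rw [LinearEquiv.eq_comp_toLinearMap_symm]
      exact key2
    rw [hfeq, LinearMap.comp_assoc,
      LinearMap.det_conj ((LinearMap.id : ↥(LinearMap.range P) →ₗ[ℝ] ↥(LinearMap.range P)).prodMap B) e]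
    letI b1 := Module.finBasis ℝ ↥(LinearMap.range P)
    letI b2 := Module.finBasis ℝ ↥W
    rw [← LinearMap.det_toMatrix (b1.prod b2), LinearMap.toMatrix_prodMap b1 b2,
      Matrix.det_fromBlocks_zero₂₁, LinearMap.toMatrix_id, Matrix.det_one, one_mul,
      LinearMap.det_toMatrix]
  -- sign analysis
  set m := finrank ℝ ↥W with hm
  set bW := Module.finBasis ℝ ↥W with hbW
  set MB := LinearMap.toMatrix bW bW B with hMB
  set φ : ℝ → ℝ := fun s => (s • (1 : Matrix (Fin m) (Fin m) ℝ) - MB).det with hφ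
  have hφcont : Continuous φ := by
    apply Continuous.matrix_det
    exact (continuous_id.smul continuous_const).sub continuous_const
  have hone : (LinearMap.toMatrix bW bW) (1 : Module.End ℝ ↥W) = 1 := by
    rw [show (1 : Module.End ℝ ↥W) = LinearMap.id from rfl, LinearMap.toMatrix_id]
  have hφdet : ∀ s : ℝ, φ s = LinearMap.det (s • (1 : Module.End ℝ ↥W) - B) := by
    intro s
    have h7 : (LinearMap.toMatrix bW bW) (s • (1 : Module.End ℝ ↥W) - B) = s • 1 - MB := by
      rw [map_sub (LinearMap.toMatrix bW bW) (s • 1) B,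
        map_smul (LinearMap.toMatrix bW bW) s 1, hone, hMB]
    rw [← LinearMap.det_toMatrix bW, h7]
  have hroot : ∀ s : ℝ, φ s = 0 → s = -1 := by
    intro s hs
    rw [hφdet s] at hs
    have hker2 := LinearMap.bot_lt_ker_of_det_eq_zero hs
    obtain ⟨w, hwmem, hwne⟩ := Submodule.exists_mem_ne_zero_of_ne_bot hker2.ne'
    rw [LinearMap.mem_ker, LinearMap.sub_apply, LinearMap.smul_apply,
      Module.End.one_apply] at hwmem
    have hBw : B w = s • w := (sub_eq_zero.mp hwmem).symm
    have hfw : f ↑w = s • (↑w : Fin ℓ → ℝ) := by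
      have h6 := LinearMap.restrict_coe_apply f hWmap w
      rw [← h6]
      show ((f.restrict hWmap) w : Fin ℓ → ℝ) = s • (↑w : Fin ℓ → ℝ)
      rw [← hB, hBw]
      rfl
    have hpows : ∀ k : ℕ, (f ^ k) ↑w = s ^ k • (↑w : Fin ℓ → ℝ) := by
      intro k; induction k with
      | zero => simp
      | succ k ih =>
          rw [pow_succ', Module.End.mul_apply, ih, _root_.map_smul, hfw, smul_smul, ← pow_succ]
    have hs1 : s ^ n = 1 := by
      have h1 : (f ^ n) ↑w = ↑w := by rw [hfpow, Module.End.one_apply]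
      rw [hpows n] at h1
      have h2 : (s ^ n - 1) • (↑w : Fin ℓ → ℝ) = 0 := by
        rw [sub_smul, one_smul, h1, sub_self]
      rcases smul_eq_zero.mp h2 with h | h
      · exact sub_eq_zero.mp h
      · exact absurd (by exact_mod_cast h : (w : Fin ℓ → ℝ) = 0) (by
          intro hc
          exact hwne (Subtype.ext hc))
    rcases pow_eq_one_iff_cases.mp hs1 with h | h | h
    · omega
    · exfalso
      have hfw1 : f ↑w = ↑w := by rw [hfw, h, one_smul]
      have hfixw := hfix ↑w hfw1
      have hker0 : P ↑w = 0 := w.2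
      rw [hker0] at hfixw
      exact hwne (Subtype.ext hfixw.symm)
    · exact h.1
  have hψcont : Continuous fun u : ℝ => (1 - u • MB : Matrix (Fin m) (Fin m) ℝ).det := by
    apply Continuous.matrix_det
    exact continuous_const.sub (continuous_id.smul continuous_const)
  obtain ⟨δ, hδpos, hball⟩ : ∃ δ > 0, ∀ u : ℝ, |u| < δ →
      0 < (1 - u • MB : Matrix (Fin m) (Fin m) ℝ).det := by
    have h1 : Set.Ioi (0:ℝ) ∈ nhds ((fun u : ℝ =>
        (1 - u • MB : Matrix (Fin m) (Fin m) ℝ).det) 0) := by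
      simp only [zero_smul, sub_zero, Matrix.det_one]
      exact Ioi_mem_nhds one_pos
    have h2 := hψcont.continuousAt.preimage_mem_nhds h1
    rw [Metric.mem_nhds_iff] at h2
    obtain ⟨δ, hδ, hsub⟩ := h2
    refine ⟨δ, hδ, fun u hu => ?_⟩
    have : u ∈ Metric.ball (0:ℝ) δ := by simpa [Real.dist_eq] using hu
    exact hsub this
  have hhalf : 0 < δ / 2 := by linarith
  have hs0pos : 0 < (δ / 2)⁻¹ := by positivity
  have hφs0 : 0 < φ ((δ / 2)⁻¹) := by
    have heq : φ ((δ / 2)⁻¹) = ((δ / 2)⁻¹) ^ m *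
        (1 - (δ / 2) • MB : Matrix (Fin m) (Fin m) ℝ).det := by
      rw [hφ]
      show ((δ / 2)⁻¹ • (1 : Matrix (Fin m) (Fin m) ℝ) - MB).det = _
      have h3 : (δ / 2)⁻¹ • (1 : Matrix (Fin m) (Fin m) ℝ) - MB =
          (δ / 2)⁻¹ • ((1 : Matrix (Fin m) (Fin m) ℝ) - (δ / 2) • MB) := by
        rw [smul_sub, smul_smul, inv_mul_cancel₀ hhalf.ne', one_smul]
      rw [h3, Matrix.det_smul, Fintype.card_fin]
    rw [heq]
    apply mul_pos (pow_pos hs0pos m)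
    apply hball
    rw [abs_of_pos hhalf]
    linarith
  have hφ0pos : 0 < φ 0 := by
    rcases lt_trichotomy (φ 0) 0 with hlt | heq0 | hgt
    · exfalso
      have h0le : (0:ℝ) ≤ (δ / 2)⁻¹ := le_of_lt hs0pos
      have hIVT := intermediate_value_Icc h0le hφcont.continuousOn
      have hmem : (0:ℝ) ∈ Set.Icc (φ 0) (φ ((δ / 2)⁻¹)) := ⟨le_of_lt hlt, le_of_lt hφs0⟩
      obtain ⟨c, hc, hc0⟩ := hIVT hmem
      have hcm1 := hroot c hc0
      rw [hcm1] at hc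
      have := hc.1
      linarith
    · exfalso
      have := hroot 0 heq0
      norm_num at this
    · exact hgt
  have hφ0 : φ 0 = (-1 : ℝ) ^ m * LinearMap.det B := by
    rw [hφ]
    show ((0:ℝ) • (1 : Matrix (Fin m) (Fin m) ℝ) - MB).det = _
    rw [zero_smul, zero_sub, Matrix.det_neg, Fintype.card_fin, hMB, LinearMap.det_toMatrix]
  have hfinal : 0 < (-1 : ℝ) ^ m * ((Rz.det : ℤ) : ℝ) := by
    rw [← hAdet, ← hdetf, hdetB, ← hφ0]
    exact hφ0pos
  rw [← hrankW]
  rcases hdet1 with h | h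
  · rw [h] at hfinal ⊢
    rcases Nat.even_or_odd m with he | ho
    · rw [Even.neg_one_pow he]
    · exfalso
      rw [Odd.neg_one_pow ho] at hfinal
      norm_num at hfinal
  · rw [h] at hfinal ⊢
    rcases Nat.even_or_odd m with he | ho
    · exfalso
      rw [Even.neg_one_pow he] at hfinal
      norm_num at hfinal
    · rw [Odd.neg_one_pow ho]

/-- Reciprocity: Define the reciprocity character
`δ_ρ(γ) = det R_γ`. Then `δ_ρ(γ) = (−1)^{rank(R_γ − I)}`, `δ_ρ` is
multiplicative (hence a 1-dimensional, irreducible character), and for every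
irreducible character `χ` the multiplicities satisfy
`m(χ ⊗ δ_ρ; q) = (−1)^ℓ m(χ; −q)`, where `m(χ; −q)` denotes the extension of
the quasi-polynomial `m(χ; ·)` to negative arguments, i.e. the explicit formula
`(1/#Γ) Σ_γ χ(γ) (∏_j gcd(e_{γ,j}, q)) (−q)^{ℓ−r(γ)}` (note
`gcd(e, −q) = gcd(e, q)`). Ranks `r γ` and elementary divisors `d γ j` of
`R_γ − I` are encoded by Smith normal forms. -/
theorem stmt14 (ℓ : ℕ) (Γ : Type) [Group Γ] [Fintype Γ]
    (ρ : Γ →* Matrix.GeneralLinearGroup (Fin ℓ) ℤ) (hρ : Function.Injective ρ)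
    (V : FDRep ℂ Γ) (hV : CategoryTheory.Simple V)
    (r : Γ → ℕ) (hr : ∀ γ, r γ ≤ ℓ)
    (S T : Γ → Matrix (Fin ℓ) (Fin ℓ) ℤ)
    (hS : ∀ γ, IsUnit (S γ).det) (hT : ∀ γ, IsUnit (T γ).det)
    (d : Γ → Fin ℓ → ℤ)
    (hSNF : ∀ γ, S γ * ((ρ γ : Matrix (Fin ℓ) (Fin ℓ) ℤ) - 1) * T γ = Matrix.diagonal (d γ))
    (hpos : ∀ γ, ∀ i : Fin ℓ, (i : ℕ) < r γ → 0 < d γ i)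
    (hzero : ∀ γ, ∀ i : Fin ℓ, r γ ≤ (i : ℕ) → d γ i = 0)
    (hdvd : ∀ γ, ∀ i j : Fin ℓ, i ≤ j → (j : ℕ) < r γ → d γ i ∣ d γ j) :
    (∀ γ : Γ, (ρ γ : Matrix (Fin ℓ) (Fin ℓ) ℤ).det = (-1 : ℤ) ^ (r γ))
    ∧ (∀ γ η : Γ, ((ρ (γ * η) : Matrix (Fin ℓ) (Fin ℓ) ℤ).det : ℤ)
        = (ρ γ : Matrix (Fin ℓ) (Fin ℓ) ℤ).det * (ρ η : Matrix (Fin ℓ) (Fin ℓ) ℤ).det)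
    ∧ (∀ q : ℕ, 0 < q →
        (Fintype.card Γ : ℂ)⁻¹ * ∑ γ : Γ,
            (V.character γ * ((ρ γ : Matrix (Fin ℓ) (Fin ℓ) ℤ).det : ℂ)) *
              (starRingEnd ℂ) ((fixCard (ρ γ : Matrix (Fin ℓ) (Fin ℓ) ℤ) q : ℂ))
          = (-1 : ℂ) ^ ℓ * ((Fintype.card Γ : ℂ)⁻¹ * ∑ γ : Γ, V.character γ *
              ((∏ i : Fin ℓ, if (i : ℕ) < r γ then (Int.gcd (d γ i) (q : ℤ) : ℂ) else 1)
                * (-(q : ℂ)) ^ (ℓ - r γ)))) := by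
  classical
  -- finite order of each matrix
  have hRpow : ∀ γ : Γ, ((ρ γ : Matrix (Fin ℓ) (Fin ℓ) ℤ)) ^ (orderOf γ) = 1 := by
    intro γ
    have h1 : (ρ γ) ^ (orderOf γ) = 1 := by
      rw [← map_pow, pow_orderOf_eq_one, _root_.map_one]
    rw [← Units.val_pow_eq_pow_val, h1, Units.val_one]
  -- rank over ℝ
  have hrankR : ∀ γ : Γ,
      ((Int.castRingHom ℝ).mapMatrix (ρ γ : Matrix (Fin ℓ) (Fin ℓ) ℤ) - 1).rank = r γ := by
    intro γ
    set πr := Int.castRingHom ℝ with hπr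
    have hd : πr.mapMatrix (S γ) * (πr.mapMatrix (ρ γ : Matrix (Fin ℓ) (Fin ℓ) ℤ) - 1) *
        πr.mapMatrix (T γ) = diagonal (fun i => ((d γ i : ℤ) : ℝ)) := by
      calc πr.mapMatrix (S γ) * (πr.mapMatrix (ρ γ : Matrix (Fin ℓ) (Fin ℓ) ℤ) - 1) *
            πr.mapMatrix (T γ)
          = πr.mapMatrix (S γ * ((ρ γ : Matrix (Fin ℓ) (Fin ℓ) ℤ) - 1) * T γ) := by
            rw [_root_.map_mul, _root_.map_mul, map_sub, _root_.map_one]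
        _ = πr.mapMatrix (diagonal (d γ)) := by rw [hSNF γ]
        _ = diagonal (fun i => ((d γ i : ℤ) : ℝ)) := by
            rw [RingHom.mapMatrix_apply, Matrix.diagonal_map (map_zero πr)]
            rfl
    have hrank1 : (πr.mapMatrix (S γ) * (πr.mapMatrix (ρ γ : Matrix (Fin ℓ) (Fin ℓ) ℤ) - 1) *
        πr.mapMatrix (T γ)).rank = (πr.mapMatrix (ρ γ : Matrix (Fin ℓ) (Fin ℓ) ℤ) - 1).rank := by
      rw [Matrix.rank_mul_eq_left_of_isUnit_det _ _
        (by rw [← RingHom.map_det]; exact (hT γ).map πr)]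
      exact Matrix.rank_mul_eq_right_of_isUnit_det _ _
        (by rw [← RingHom.map_det]; exact (hS γ).map πr)
    rw [← hrank1, hd, Matrix.rank_diagonal]
    rw [Fintype.card_subtype]
    have hiff : ∀ i : Fin ℓ, ((((d γ i : ℤ) : ℝ)) ≠ 0) ↔ ((i : ℕ) < r γ) := by
      intro i
      rw [ne_eq, Int.cast_eq_zero]
      constructor
      · intro h
        by_contra hc
        exact h (hzero γ i (le_of_not_gt hc))
      · intro h h2
        exact absurd h2 (hpos γ i h).ne'
    rw [Finset.filter_congr (fun i _ => hiff i)]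
    exact filter_lt_card (hr γ)
  have part1 : ∀ γ : Γ, (ρ γ : Matrix (Fin ℓ) (Fin ℓ) ℤ).det = (-1 : ℤ) ^ (r γ) := by
    intro γ
    exact det_sign_lemma (orderOf_pos γ) _ (hRpow γ) (hrankR γ)
  refine ⟨part1, ?_, ?_⟩
  · intro γ η
    rw [_root_.map_mul, Units.val_mul, Matrix.det_mul]
  · intro q hq
    have hfixval : ∀ γ : Γ, fixCard (ρ γ : Matrix (Fin ℓ) (Fin ℓ) ℤ) q
        = ∏ i : Fin ℓ, Int.gcd (d γ i) q :=
      fun γ => fixCard_formula q hq _ _ _ (hS γ) (hT γ) (d γ) (hSNF γ)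
    have main : ∀ γ : Γ,
        (V.character γ * ((ρ γ : Matrix (Fin ℓ) (Fin ℓ) ℤ).det : ℂ)) *
          (starRingEnd ℂ) ((fixCard (ρ γ : Matrix (Fin ℓ) (Fin ℓ) ℤ) q : ℂ))
        = (-1 : ℂ) ^ ℓ * (V.character γ *
            ((∏ i : Fin ℓ, if (i : ℕ) < r γ then (Int.gcd (d γ i) (q : ℤ) : ℂ) else 1)
              * (-(q : ℂ)) ^ (ℓ - r γ))) := by
      intro γ
      rw [Complex.conj_natCast, hfixval γ, Nat.cast_prod]
      have hdc : (((ρ γ : Matrix (Fin ℓ) (Fin ℓ) ℤ).det : ℤ) : ℂ) = (-1 : ℂ) ^ (r γ) := by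
        rw [part1 γ]
        push_cast
        ring
      rw [hdc]
      have hsplit : (∏ i : Fin ℓ, ((Int.gcd (d γ i) (q : ℤ) : ℕ) : ℂ))
          = (∏ i : Fin ℓ, if (i : ℕ) < r γ then (Int.gcd (d γ i) (q : ℤ) : ℂ) else 1)
            * (q : ℂ) ^ (ℓ - r γ) := by
        have h1 : ∀ i : Fin ℓ, ((Int.gcd (d γ i) (q : ℤ) : ℕ) : ℂ)
            = (if (i : ℕ) < r γ then (Int.gcd (d γ i) (q : ℤ) : ℂ) else 1)
              * (if (i : ℕ) < r γ then 1 else (q : ℂ)) := by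
          intro i
          by_cases h : (i : ℕ) < r γ
          · simp [h]
          · simp only [h, if_false, one_mul]
            rw [hzero γ i (le_of_not_gt h)]
            simp [Int.gcd]
        rw [Finset.prod_congr rfl (fun i _ => h1 i), Finset.prod_mul_distrib]
        congr 1
        rw [Finset.prod_ite (fun _ => (1:ℂ)) (fun _ => (q:ℂ)), Finset.prod_const_one,
          Finset.prod_const, one_mul]
        congr 1
        have h2 := Finset.card_filter_add_card_filter_not
          (s := (Finset.univ : Finset (Fin ℓ))) (fun i : Fin ℓ => (i : ℕ) < r γ)
        rw [filter_lt_card (hr γ)] at h2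
        rw [Finset.card_univ, Fintype.card_fin] at h2
        omega
      rw [hsplit]
      have hsgn : (-1 : ℂ) ^ (r γ) * (q : ℂ) ^ (ℓ - r γ)
          = (-1 : ℂ) ^ ℓ * (-(q : ℂ)) ^ (ℓ - r γ) := by
        have h2 : ℓ + (ℓ - r γ) = 2 * (ℓ - r γ) + r γ := by
          have := hr γ
          omega
        calc (-1 : ℂ) ^ (r γ) * (q : ℂ) ^ (ℓ - r γ)
            = ((-1 : ℂ) ^ (2 * (ℓ - r γ)) * (-1 : ℂ) ^ (r γ)) * (q : ℂ) ^ (ℓ - r γ) := by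
              rw [pow_mul]
              norm_num
          _ = (-1 : ℂ) ^ (ℓ + (ℓ - r γ)) * (q : ℂ) ^ (ℓ - r γ) := by
              rw [h2, pow_add]
          _ = ((-1 : ℂ) ^ ℓ * (-1 : ℂ) ^ (ℓ - r γ)) * (q : ℂ) ^ (ℓ - r γ) := by
              rw [pow_add]
          _ = (-1 : ℂ) ^ ℓ * (-(q : ℂ)) ^ (ℓ - r γ) := by
              rw [neg_pow]
              ring
      linear_combination (V.character γ *
        (∏ i : Fin ℓ, if (i : ℕ) < r γ then (Int.gcd (d γ i) (q : ℤ) : ℂ) else 1)) * hsgn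
    rw [Finset.sum_congr rfl (fun γ _ => main γ), ← Finset.mul_sum]
    ring
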